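/- Let i ∈ N be a buyer and X ⊆ N−i. Then the function G ↦ f_{w,d}(E_X ∪ G) − f_{w,d}(E_X) is monotone submodular on E_i (as a function of G ⊆ E_i). -/

import Mathlib

open Finset

noncomputable section

namespace TwoSidedMarket

variable {B S : Type*} [Fintype B] [Fintype S] [DecidableEq B] [DecidableEq S]

/-- A function `f` on subsets of a ground set `G` is monotone submodular:
`f ∅ = 0`, monotone on subsets of `G`, and submodular on subsets of `G`. -/
def IsMonoSubmodular {α : Type*} [DecidableEq α] (G : Finset α) (f : Finset α → ℝ) : Prop :=
  f ∅ = 0 ∧ (∀ A B : Finset α, A ⊆ B → B ⊆ G → f A ≤ f B) ∧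
    ∀ A B : Finset α, A ⊆ G → B ⊆ G → f (A ∩ B) + f (A ∪ B) ≤ f A + f B

/-- Monotone submodular, without the requirement of vanishing at `∅`. -/
def IsMonoSubmodularWeak {α : Type*} [DecidableEq α] (G : Finset α) (f : Finset α → ℝ) : Prop :=
  (∀ A B : Finset α, A ⊆ B → B ⊆ G → f A ≤ f B) ∧
    ∀ A B : Finset α, A ⊆ G → B ⊆ G → f (A ∩ B) + f (A ∪ B) ≤ f A + f B

/-- `E_i`: the edges of `E` incident to buyer `i`. -/
def Ei (E : Finset (B × S)) (i : B) : Finset (B × S) := E.filter fun e => e.1 = i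

/-- `E_j`: the edges of `E` incident to seller `j`. -/
def Ej (E : Finset (B × S)) (j : S) : Finset (B × S) := E.filter fun e => e.2 = j

/-- `E_X`: the edges of `E` incident to some buyer in `X`. -/
def EX (E : Finset (B × S)) (X : Finset B) : Finset (B × S) := E.filter fun e => e.1 ∈ X

/-- `N_F`: the buyers incident to some edge of `F`. -/
def NF (F : Finset (B × S)) : Finset B := F.image Prod.fst

/-- `x(F) = Σ_{e ∈ F} x e`. -/
def vsum (x : B × S → ℝ) (F : Finset (B × S)) : ℝ := ∑ e ∈ F, x e

/-- Membership `w ∈ P = ⊕_j P_j`: `w` is nonnegative, supported on `E`, and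
`w|_{E_j} ∈ P_j` for every seller `j`. -/
def memP (E : Finset (B × S)) (fj : S → Finset (B × S) → ℝ) (w : B × S → ℝ) : Prop :=
  (∀ e, 0 ≤ w e) ∧ (∀ e ∉ E, w e = 0) ∧ ∀ j : S, ∀ F ⊆ Ej E j, vsum w F ≤ fj j F

/-- `f(F) := Σ_{j ∈ M} f_j (E_j ∩ F)`. -/
def fTot (E : Finset (B × S)) (fj : S → Finset (B × S) → ℝ) (F : Finset (B × S)) : ℝ :=
  ∑ j : S, fj j (Ej E j ∩ F)

/-- `f_w(F) := min_{F ⊆ F' ⊆ E} (f(F') - w(F'))`. -/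
def fw (E : Finset (B × S)) (fj : S → Finset (B × S) → ℝ)
    (w : B × S → ℝ) (F : Finset (B × S)) : ℝ :=
  sInf {r : ℝ | ∃ F' : Finset (B × S), F ⊆ F' ∧ F' ⊆ E ∧ r = fTot E fj F' - vsum w F'}

/-- Membership in the remnant supply polytope `P_{w,d}`. -/
def memPwd (E : Finset (B × S)) (fj : S → Finset (B × S) → ℝ)
    (w : B × S → ℝ) (d : B → ℝ) (x : B × S → ℝ) : Prop :=
  (∀ e, 0 ≤ x e) ∧ (∀ e ∉ E, x e = 0) ∧ memP E fj (w + x) ∧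
    ∀ i : B, vsum x (Ei E i) ≤ d i

/-- `f_{w,d}(F) := max_{x ∈ P_{w,d}} x(F)`. -/
def fwd (E : Finset (B × S)) (fj : S → Finset (B × S) → ℝ)
    (w : B × S → ℝ) (d : B → ℝ) (F : Finset (B × S)) : ℝ :=
  sSup {r : ℝ | ∃ x : B × S → ℝ, memPwd E fj w d x ∧ r = vsum x F}

/-- `P^i_{w,d}(ξ)`: the remnant supply polytope of the buyers other than `i`,
given that buyer `i` receives `ξ`.  (Vectors indexed by `N - i` are encoded as
functions on all of `B` vanishing at `i`.) -/
def PiWd (E : Finset (B × S)) (fj : S → Finset (B × S) → ℝ)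
    (w : B × S → ℝ) (d : B → ℝ) (i : B) (ξ : B × S → ℝ) : Set (B → ℝ) :=
  {u | u i = 0 ∧ (∀ k, 0 ≤ u k) ∧
    ∃ x : B × S → ℝ, memPwd E fj w d x ∧ (∀ e ∈ Ei E i, x e = ξ e) ∧
      ∀ k : B, k ≠ i → vsum x (Ei E k) = u k}

/-- The clinching polytope `P^i_{w,d}` of buyer `i`:
all `ξ ∈ ℝ_{≥0}^{E_i}` with `P^i_{w,d}(ξ) = P^i_{w,d}(0)`. -/
def ClinchP (E : Finset (B × S)) (fj : S → Finset (B × S) → ℝ)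
    (w : B × S → ℝ) (d : B → ℝ) (i : B) : Set (B × S → ℝ) :=
  {ξ | (∀ e, 0 ≤ ξ e) ∧ (∀ e ∉ Ei E i, ξ e = 0) ∧
    PiWd E fj w d i ξ = PiWd E fj w d i 0}


section Generic

variable {α : Type*} [DecidableEq α]

/-- Frank's sandwich theorem, vector form: between a supermodular `p` and a
monotone submodular `b` with `p ≤ b` there is a nonnegative vector. -/
lemma sandwich_aux (n : ℕ) : ∀ (A : Finset α), A.card ≤ n → ∀ (b p : Finset α → ℝ),
    b ∅ = 0 →
    (∀ St Tt : Finset α, St ⊆ Tt → Tt ⊆ A → b St ≤ b Tt) →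
    (∀ St Tt : Finset α, St ⊆ A → Tt ⊆ A → b (St ∩ Tt) + b (St ∪ Tt) ≤ b St + b Tt) →
    (∀ St Tt : Finset α, St ⊆ A → Tt ⊆ A → p St + p Tt ≤ p (St ∩ Tt) + p (St ∪ Tt)) →
    p ∅ ≤ 0 →
    (∀ St : Finset α, St ⊆ A → p St ≤ b St) →
    ∃ ξ : α → ℝ, (∀ e, 0 ≤ ξ e) ∧ (∀ e ∉ A, ξ e = 0) ∧
      ∀ St : Finset α, St ⊆ A → p St ≤ ∑ e ∈ St, ξ e ∧ ∑ e ∈ St, ξ e ≤ b St := by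
  induction n with
  | zero =>
    intro A hA b p hb0 hbmono hbsub hpsup hp0 hpb
    have hAe : A = ∅ := card_eq_zero.mp (Nat.le_zero.mp hA)
    subst hAe
    exact ⟨fun _ => 0, fun _ => le_rfl, fun _ _ => rfl, by
      intro St hSt
      have : St = ∅ := subset_empty.mp hSt
      subst this
      simp [hb0, hp0]⟩
  | succ n ih =>
    intro A hA b p hb0 hbmono hbsub hpsup hp0 hpb
    rcases A.eq_empty_or_nonempty with rfl | ⟨e, he⟩
    · exact ih ∅ (by simp) b p hb0 hbmono hbsub hpsup hp0 hpb
    set A' := A.erase e with hA'def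
    have hA'card : A'.card ≤ n := by
      rw [hA'def, card_erase_of_mem he]
      omega
    have hsubA : A' ⊆ A := erase_subset _ _
    have hins : ∀ St : Finset α, St ⊆ A' → insert e St ⊆ A := by
      intro St hSt
      exact insert_subset he (hSt.trans hsubA)
    have hnotmem : ∀ St : Finset α, St ⊆ A' → e ∉ St := by
      intro St hSt hc
      exact (mem_erase.mp (hSt hc)).1 rfl
    -- the threshold t
    have hpne : (A'.powerset).Nonempty := ⟨∅, by simp⟩
    set L : ℝ := (A'.powerset).sup' hpne (fun St => p (insert e St) - b St) with hLdef
    set t : ℝ := max L 0 with htdef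
    have hLle : ∀ St : Finset α, St ⊆ A' → p (insert e St) - b St ≤ L := by
      intro St hSt
      exact le_sup' (fun St => p (insert e St) - b St) (mem_powerset.mpr hSt)
    have htL : L ≤ t := le_max_left _ _
    have ht0 : 0 ≤ t := le_max_right _ _
    -- t ≤ b {e}
    have htbe : t ≤ b {e} := by
      have h1 : L ≤ b {e} := by
        apply sup'_le
        intro St hSt
        have hSt' := mem_powerset.mp hSt
        have h2 : b (insert e St) ≤ b St + b {e} := by
          have := hbsub St {e} (hSt'.trans hsubA) (by simpa using he)
          have hint : St ∩ {e} = ∅ := by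
            apply eq_empty_of_forall_notMem
            intro x hx
            rcases mem_inter.mp hx with ⟨hx1, hx2⟩
            rw [mem_singleton] at hx2
            exact hnotmem St hSt' (hx2 ▸ hx1)
          rw [hint, hb0, union_comm] at this
          rw [← insert_eq] at this
          linarith
        have h3 := hpb (insert e St) (hins St hSt')
        linarith
      have h2 : (0:ℝ) ≤ b {e} := by
        have := hbmono ∅ {e} (empty_subset _) (by simpa using he)
        rw [hb0] at this; exact this
      exact max_le h1 h2
    -- t ≤ b (insert e S) - p S for S ⊆ A'
    have htup : ∀ St : Finset α, St ⊆ A' → t ≤ b (insert e St) - p St := by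
      intro St hSt
      have h0 : (0:ℝ) ≤ b (insert e St) - p St := by
        have h1 := hpb St (hSt.trans hsubA)
        have h2 := hbmono St (insert e St) (subset_insert _ _) (hins St hSt)
        linarith
      have hL : L ≤ b (insert e St) - p St := by
        apply sup'_le
        intro Tt hTt
        have hTt' := mem_powerset.mp hTt
        -- p (insert e Tt) + p St ≤ b Tt + b (insert e St)
        have hsup := hpsup (insert e Tt) St (hins Tt hTt') (hSt.trans hsubA)
        have hiu : insert e Tt ∪ St = insert e (Tt ∪ St) := insert_union _ _ _
        have hii : insert e Tt ∩ St = Tt ∩ St := by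
          apply insert_inter_of_notMem (hnotmem St hSt)
        rw [hiu, hii] at hsup
        have hple := hpb (Tt ∩ St) ((inter_subset_left.trans hTt').trans hsubA)
        have hple2 := hpb (insert e (Tt ∪ St)) (by
          apply insert_subset he
          exact (union_subset hTt' hSt).trans hsubA)
        have hbsub2 := hbsub Tt (insert e St) (hTt'.trans hsubA) (hins St hSt)
        have hii2 : Tt ∩ insert e St = Tt ∩ St := by
          rw [inter_comm, insert_inter_of_notMem (hnotmem Tt hTt'), inter_comm]
        have hiu2 : Tt ∪ insert e St = insert e (Tt ∪ St) := by
          rw [union_comm, insert_union, union_comm]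
        rw [hii2, hiu2] at hbsub2
        linarith
      exact max_le hL h0
    -- contracted functions
    set b' : Finset α → ℝ := fun St => min (b St) (b (insert e St) - t) with hb'def
    set p' : Finset α → ℝ := fun St => max (p St) (p (insert e St) - t) with hp'def
    have hb'0 : b' ∅ = 0 := by
      have : b (insert e ∅) - t ≥ 0 := by
        simp only [insert_empty_eq]
        linarith [htbe]
      simp only [hb'def, hb0]
      rw [min_eq_left (by linarith)]
    have hb'mono : ∀ St Tt : Finset α, St ⊆ Tt → Tt ⊆ A' → b' St ≤ b' Tt := by
      intro St Tt hST hTA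
      apply min_le_min
      · exact hbmono St Tt hST (hTA.trans hsubA)
      · have : insert e St ⊆ insert e Tt := insert_subset_insert _ hST
        linarith [hbmono (insert e St) (insert e Tt) this (hins Tt hTA)]
    have hb'sub : ∀ St Tt : Finset α, St ⊆ A' → Tt ⊆ A' → b' (St ∩ Tt) + b' (St ∪ Tt) ≤ b' St + b' Tt := by
      intro St Tt hS hT
      have hiA : St ∩ Tt ⊆ A' := inter_subset_left.trans hS
      have huA : St ∪ Tt ⊆ A' := union_subset hS hT
      rcases min_cases (b St) (b (insert e St) - t) with ⟨hbS, _⟩ | ⟨hbS, _⟩ <;>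
        rcases min_cases (b Tt) (b (insert e Tt) - t) with ⟨hbT, _⟩ | ⟨hbT, _⟩
      · -- both plain
        have := hbsub St Tt (hS.trans hsubA) (hT.trans hsubA)
        have h1 : b' (St ∩ Tt) ≤ b (St ∩ Tt) := min_le_left _ _
        have h2 : b' (St ∪ Tt) ≤ b (St ∪ Tt) := min_le_left _ _
        simp only [hb'def] at *
        linarith
      · -- S plain, T plus
        have hsub2 := hbsub St (insert e Tt) (hS.trans hsubA) (hins Tt hT)
        have hii : St ∩ insert e Tt = St ∩ Tt := by
          rw [inter_comm, insert_inter_of_notMem (hnotmem St hS), inter_comm]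
        have hiu : St ∪ insert e Tt = insert e (St ∪ Tt) := by
          rw [union_comm, insert_union, union_comm]
        rw [hii, hiu] at hsub2
        have h1 : b' (St ∩ Tt) ≤ b (St ∩ Tt) := min_le_left _ _
        have h2 : b' (St ∪ Tt) ≤ b (insert e (St ∪ Tt)) - t := min_le_right _ _
        simp only [hb'def] at *
        linarith
      · -- S plus, T plain
        have hsub2 := hbsub (insert e St) Tt (hins St hS) (hT.trans hsubA)
        have hii : insert e St ∩ Tt = St ∩ Tt := insert_inter_of_notMem (hnotmem Tt hT)
        have hiu : insert e St ∪ Tt = insert e (St ∪ Tt) := insert_union _ _ _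
        rw [hii, hiu] at hsub2
        have h1 : b' (St ∩ Tt) ≤ b (St ∩ Tt) := min_le_left _ _
        have h2 : b' (St ∪ Tt) ≤ b (insert e (St ∪ Tt)) - t := min_le_right _ _
        simp only [hb'def] at *
        linarith
      · -- both plus
        have hsub2 := hbsub (insert e St) (insert e Tt) (hins St hS) (hins Tt hT)
        have hii : insert e St ∩ insert e Tt = insert e (St ∩ Tt) := by
          ext x; simp only [mem_inter, mem_insert]; tauto
        have hiu : insert e St ∪ insert e Tt = insert e (St ∪ Tt) := by
          ext x; simp only [mem_union, mem_insert]; tauto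
        rw [hii, hiu] at hsub2
        have h1 : b' (St ∩ Tt) ≤ b (insert e (St ∩ Tt)) - t := min_le_right _ _
        have h2 : b' (St ∪ Tt) ≤ b (insert e (St ∪ Tt)) - t := min_le_right _ _
        simp only [hb'def] at *
        linarith
    have hp'sup : ∀ St Tt : Finset α, St ⊆ A' → Tt ⊆ A' → p' St + p' Tt ≤ p' (St ∩ Tt) + p' (St ∪ Tt) := by
      intro St Tt hS hT
      rcases max_cases (p St) (p (insert e St) - t) with ⟨hpS, _⟩ | ⟨hpS, _⟩ <;>
        rcases max_cases (p Tt) (p (insert e Tt) - t) with ⟨hpT, _⟩ | ⟨hpT, _⟩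
      · have := hpsup St Tt (hS.trans hsubA) (hT.trans hsubA)
        have h1 : p (St ∩ Tt) ≤ p' (St ∩ Tt) := le_max_left _ _
        have h2 : p (St ∪ Tt) ≤ p' (St ∪ Tt) := le_max_left _ _
        simp only [hp'def] at *
        linarith
      · have hsup2 := hpsup St (insert e Tt) (hS.trans hsubA) (hins Tt hT)
        have hii : St ∩ insert e Tt = St ∩ Tt := by
          rw [inter_comm, insert_inter_of_notMem (hnotmem St hS), inter_comm]
        have hiu : St ∪ insert e Tt = insert e (St ∪ Tt) := by
          rw [union_comm, insert_union, union_comm]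
        rw [hii, hiu] at hsup2
        have h1 : p (St ∩ Tt) ≤ p' (St ∩ Tt) := le_max_left _ _
        have h2 : p (insert e (St ∪ Tt)) - t ≤ p' (St ∪ Tt) := le_max_right _ _
        simp only [hp'def] at *
        linarith
      · have hsup2 := hpsup (insert e St) Tt (hins St hS) (hT.trans hsubA)
        have hii : insert e St ∩ Tt = St ∩ Tt := insert_inter_of_notMem (hnotmem Tt hT)
        have hiu : insert e St ∪ Tt = insert e (St ∪ Tt) := insert_union _ _ _
        rw [hii, hiu] at hsup2
        have h1 : p (St ∩ Tt) ≤ p' (St ∩ Tt) := le_max_left _ _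
        have h2 : p (insert e (St ∪ Tt)) - t ≤ p' (St ∪ Tt) := le_max_right _ _
        simp only [hp'def] at *
        linarith
      · have hsup2 := hpsup (insert e St) (insert e Tt) (hins St hS) (hins Tt hT)
        have hii : insert e St ∩ insert e Tt = insert e (St ∩ Tt) := by
          ext x; simp only [mem_inter, mem_insert]; tauto
        have hiu : insert e St ∪ insert e Tt = insert e (St ∪ Tt) := by
          ext x; simp only [mem_union, mem_insert]; tauto
        rw [hii, hiu] at hsup2
        have h1 : p (insert e (St ∩ Tt)) - t ≤ p' (St ∩ Tt) := le_max_right _ _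
        have h2 : p (insert e (St ∪ Tt)) - t ≤ p' (St ∪ Tt) := le_max_right _ _
        simp only [hp'def] at *
        linarith
    have hp'0 : p' ∅ ≤ 0 := by
      have h1 : p (insert e ∅) - t ≤ 0 := by
        have := hLle ∅ (empty_subset _)
        rw [hb0] at this
        simp only [insert_empty_eq] at *
        linarith
      simp only [hp'def]
      exact max_le hp0 h1
    have hp'b' : ∀ St : Finset α, St ⊆ A' → p' St ≤ b' St := by
      intro St hSt
      have h1 : p St ≤ b St := hpb St (hSt.trans hsubA)
      have h2 : p St ≤ b (insert e St) - t := by linarith [htup St hSt]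
      have h3 : p (insert e St) - t ≤ b St := by linarith [hLle St hSt, htL]
      have h4 : p (insert e St) - t ≤ b (insert e St) - t := by
        linarith [hpb (insert e St) (hins St hSt)]
      simp only [hp'def, hb'def]
      exact max_le (le_min h1 h2) (le_min h3 h4)
    obtain ⟨ξ', hξ'0, hξ'supp, hξ'bd⟩ :=
      ih A' hA'card b' p' hb'0 hb'mono hb'sub hp'sup hp'0 hp'b'
    refine ⟨fun x => if x = e then t else ξ' x, ?_, ?_, ?_⟩
    · intro x
      by_cases hx : x = e
      · simp [hx, ht0]
      · simp [hx, hξ'0 x]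
    · intro x hx
      have hxe : x ≠ e := fun hc => hx (hc ▸ he)
      have : x ∉ A' := fun hc => hx (hsubA hc)
      simp [hxe, hξ'supp x this]
    · intro St hSt
      by_cases heS : e ∈ St
      · set S0 := St.erase e with hS0def
        have hS0A' : S0 ⊆ A' := fun x hx => by
          rw [mem_erase] at hx ⊢
          exact ⟨hx.1, hSt hx.2⟩
        have hsum : ∑ x ∈ St, (if x = e then t else ξ' x) = t + ∑ x ∈ S0, ξ' x := by
          rw [← insert_erase heS, sum_insert (notMem_erase _ _)]
          simp only [if_pos rfl]
          congr 1
          apply sum_congr rfl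
          intro x hx
          rw [if_neg (mem_erase.mp hx).1]
        have hback : insert e S0 = St := insert_erase heS
        have hbd := hξ'bd S0 hS0A'
        constructor
        · have : p (insert e S0) - t ≤ p' S0 := le_max_right _ _
          rw [hback] at this
          rw [hsum]
          linarith [hbd.1]
        · have : b' S0 ≤ b (insert e S0) - t := min_le_right _ _
          rw [hback] at this
          rw [hsum]
          linarith [hbd.2]
      · have hSA' : St ⊆ A' := fun x hx => mem_erase.mpr ⟨fun hc => heS (by rwa [hc] at hx), hSt hx⟩
        have hsum : ∑ x ∈ St, (if x = e then t else ξ' x) = ∑ x ∈ St, ξ' x := by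
          apply sum_congr rfl
          intro x hx
          rw [if_neg (fun hc : x = e => heS (by rwa [hc] at hx))]
        have hbd := hξ'bd St hSA'
        rw [hsum]
        constructor
        · linarith [hbd.1, le_max_left (p St) (p (insert e St) - t)]
        · linarith [hbd.2, min_le_left (b St) (b (insert e St) - t)]

lemma sandwich (A : Finset α) (b p : Finset α → ℝ)
    (hb0 : b ∅ = 0)
    (hbmono : ∀ St Tt : Finset α, St ⊆ Tt → Tt ⊆ A → b St ≤ b Tt)
    (hbsub : ∀ St Tt : Finset α, St ⊆ A → Tt ⊆ A → b (St ∩ Tt) + b (St ∪ Tt) ≤ b St + b Tt)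
    (hpsup : ∀ St Tt : Finset α, St ⊆ A → Tt ⊆ A → p St + p Tt ≤ p (St ∩ Tt) + p (St ∪ Tt))
    (hp0 : p ∅ ≤ 0)
    (hpb : ∀ St : Finset α, St ⊆ A → p St ≤ b St) :
    ∃ ξ : α → ℝ, (∀ e, 0 ≤ ξ e) ∧ (∀ e ∉ A, ξ e = 0) ∧
      ∀ St : Finset α, St ⊆ A → p St ≤ ∑ e ∈ St, ξ e ∧ ∑ e ∈ St, ξ e ≤ b St :=
  sandwich_aux A.card A le_rfl b p hb0 hbmono hbsub hpsup hp0 hpb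

/-- Strong duality for maximizing total mass in a polymatroid intersected with
partition capacity constraints. -/
lemma duality {B : Type*} [DecidableEq B] (β : α → B) (d : B → ℝ) (hd : ∀ k, 0 ≤ d k) :
    ∀ (K : Finset B) (F : Finset α), (∀ e ∈ F, β e ∈ K) →
    ∀ (g : Finset α → ℝ), g ∅ = 0 → (∀ St Tt : Finset α, St ⊆ Tt → g St ≤ g Tt) →
    (∀ St Tt : Finset α, g (St ∩ Tt) + g (St ∪ Tt) ≤ g St + g Tt) →
    ∃ x : α → ℝ, (∀ e, 0 ≤ x e) ∧ (∀ e ∉ F, x e = 0) ∧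
      (∀ St : Finset α, St ⊆ F → ∑ e ∈ St, x e ≤ g St) ∧
      (∀ k : B, ∑ e ∈ F.filter (fun e => β e = k), x e ≤ d k) ∧
      ∑ e ∈ F, x e = (K.powerset).inf' (powerset_nonempty K)
        (fun Y => (∑ k ∈ Y, d k) + g (F.filter (fun e => β e ∉ Y))) := by
  intro K
  induction K using Finset.induction_on with
  | empty =>
    intro F hF g hg0 hgmono hgsub
    have hFe : F = ∅ := eq_empty_of_forall_notMem (fun e he => by simpa using hF e he)
    subst hFe
    refine ⟨fun _ => 0, fun _ => le_rfl, fun _ _ => rfl, ?_, ?_, ?_⟩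
    · intro St hSt
      rw [subset_empty.mp hSt]
      simp [hg0]
    · intro k
      simp [hd k]
    · simp [hg0]
  | @insert i K' hiK' ihK =>
    intro F hF g hg0 hgmono hgsub
    classical
    have hgnn : ∀ St : Finset α, 0 ≤ g St := fun St => by
      rw [← hg0]; exact hgmono ∅ St (empty_subset _)
    set Fi := F.filter (fun e => β e = i) with hFidef
    set F' := F.filter (fun e => β e ≠ i) with hF'def
    have hFiF : Fi ⊆ F := filter_subset _ _
    have hF'F : F' ⊆ F := filter_subset _ _
    have hβFi : ∀ e ∈ Fi, β e = i := fun e he => (mem_filter.mp he).2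
    have hβF' : ∀ e ∈ F', β e ≠ i := fun e he => (mem_filter.mp he).2
    have pnK : ((insert i K').powerset).Nonempty := powerset_nonempty _
    have pnK' : (K'.powerset).Nonempty := powerset_nonempty _
    have pnFi : (Fi.powerset).Nonempty := powerset_nonempty _
    set τ : ℝ := ((insert i K').powerset).inf' pnK
        (fun Y => (∑ k ∈ Y, d k) + g (F.filter (fun e => β e ∉ Y))) with hτdef
    set inr : Finset α → ℝ := fun U => (K'.powerset).inf' pnK'
        (fun Y' => (∑ k ∈ Y', d k) + g ((F.filter (fun e => β e ∉ Y')) \ U)) with hinrdef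
    set p : Finset α → ℝ := fun U => τ - inr U with hpdef
    set b : Finset α → ℝ := fun U => min (g U) (d i) with hbdef
    have hkey : ∀ (Y : Finset B), Y ⊆ K' → ∀ e ∈ Fi, β e ∉ Y := by
      intro Y hY e he hc
      exact hiK' (hY (by rwa [hβFi e he] at hc))
    have hb0 : b ∅ = 0 := by
      simp only [hbdef, hg0]
      exact min_eq_left (hd i)
    have hbmono : ∀ St Tt : Finset α, St ⊆ Tt → Tt ⊆ Fi → b St ≤ b Tt := by
      intro St Tt hST _
      exact min_le_min (hgmono _ _ hST) le_rfl
    have hbsub : ∀ St Tt : Finset α, St ⊆ Fi → Tt ⊆ Fi →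
        b (St ∩ Tt) + b (St ∪ Tt) ≤ b St + b Tt := by
      intro St Tt _ _
      rcases min_cases (g St) (d i) with ⟨h1, _⟩ | ⟨h1, _⟩ <;>
        rcases min_cases (g Tt) (d i) with ⟨h2, _⟩ | ⟨h2, _⟩
      · have hs := hgsub St Tt
        have hi : b (St ∩ Tt) ≤ g (St ∩ Tt) := min_le_left _ _
        have hu : b (St ∪ Tt) ≤ g (St ∪ Tt) := min_le_left _ _
        simp only [hbdef] at *
        linarith
      · have hi : b (St ∩ Tt) ≤ g (St ∩ Tt) := min_le_left _ _
        have hmono : g (St ∩ Tt) ≤ g St := hgmono _ _ inter_subset_left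
        have hu : b (St ∪ Tt) ≤ d i := min_le_right _ _
        simp only [hbdef] at *
        linarith
      · have hi : b (St ∩ Tt) ≤ g (St ∩ Tt) := min_le_left _ _
        have hmono : g (St ∩ Tt) ≤ g Tt := hgmono _ _ inter_subset_right
        have hu : b (St ∪ Tt) ≤ d i := min_le_right _ _
        simp only [hbdef] at *
        linarith
      · have hi : b (St ∩ Tt) ≤ d i := min_le_right _ _
        have hu : b (St ∪ Tt) ≤ d i := min_le_right _ _
        simp only [hbdef] at *
        linarith
    have hpsup : ∀ U1 U2 : Finset α, U1 ⊆ Fi → U2 ⊆ Fi →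
        p U1 + p U2 ≤ p (U1 ∩ U2) + p (U1 ∪ U2) := by
      intro U1 U2 hU1 hU2
      have hsuff : inr (U1 ∩ U2) + inr (U1 ∪ U2) ≤ inr U1 + inr U2 := by
        obtain ⟨Y1, hY1m, hY1⟩ := exists_mem_eq_inf' pnK'
          (fun Y' => (∑ k ∈ Y', d k) + g ((F.filter (fun e => β e ∉ Y')) \ U1))
        obtain ⟨Y2, hY2m, hY2⟩ := exists_mem_eq_inf' pnK'
          (fun Y' => (∑ k ∈ Y', d k) + g ((F.filter (fun e => β e ∉ Y')) \ U2))
        rw [mem_powerset] at hY1m hY2m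
        set R1 := (F.filter (fun e => β e ∉ Y1)) \ U1 with hR1def
        set R2 := (F.filter (fun e => β e ∉ Y2)) \ U2 with hR2def
        have hid1 : (F.filter (fun e => β e ∉ Y1 ∩ Y2)) \ (U1 ∩ U2) = R1 ∪ R2 := by
          ext e
          simp only [hR1def, hR2def, mem_sdiff, mem_filter, mem_union, mem_inter]
          constructor
          · rintro ⟨⟨heF, hY⟩, hU⟩
            by_cases he1 : e ∈ U1
            · have hβ : β e ∉ Y2 := hkey Y2 hY2m e (hU1 he1)
              have he2 : e ∉ U2 := fun hc => hU ⟨he1, hc⟩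
              exact Or.inr ⟨⟨heF, hβ⟩, he2⟩
            · by_cases hb1 : β e ∈ Y1
              · have hb2 : β e ∉ Y2 := fun hc => hY ⟨hb1, hc⟩
                by_cases he2 : e ∈ U2
                · exact Or.inl ⟨⟨heF, hkey Y1 hY1m e (hU2 he2)⟩, he1⟩
                · exact Or.inr ⟨⟨heF, hb2⟩, he2⟩
              · exact Or.inl ⟨⟨heF, hb1⟩, he1⟩
          · rintro (⟨⟨heF, hY⟩, hU⟩ | ⟨⟨heF, hY⟩, hU⟩)
            · exact ⟨⟨heF, fun hc => hY hc.1⟩, fun hc => hU hc.1⟩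
            · exact ⟨⟨heF, fun hc => hY hc.2⟩, fun hc => hU hc.2⟩
        have hid2 : (F.filter (fun e => β e ∉ Y1 ∪ Y2)) \ (U1 ∪ U2) = R1 ∩ R2 := by
          ext e
          simp only [hR1def, hR2def, mem_sdiff, mem_filter, mem_union, mem_inter]
          constructor
          · rintro ⟨⟨heF, hY⟩, hU⟩
            exact ⟨⟨⟨heF, fun hc => hY (Or.inl hc)⟩, fun hc => hU (Or.inl hc)⟩,
              ⟨⟨heF, fun hc => hY (Or.inr hc)⟩, fun hc => hU (Or.inr hc)⟩⟩
          · rintro ⟨⟨⟨heF, hY1'⟩, hU1'⟩, ⟨⟨_, hY2'⟩, hU2'⟩⟩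
            refine ⟨⟨heF, ?_⟩, ?_⟩
            · rintro (hc | hc)
              exacts [hY1' hc, hY2' hc]
            · rintro (hc | hc)
              exacts [hU1' hc, hU2' hc]
        have hint : inr (U1 ∩ U2) ≤ (∑ k ∈ Y1 ∩ Y2, d k) + g (R1 ∪ R2) := by
          rw [← hid1]
          exact inf'_le _ (mem_powerset.mpr (inter_subset_left.trans hY1m))
        have huni : inr (U1 ∪ U2) ≤ (∑ k ∈ Y1 ∪ Y2, d k) + g (R1 ∩ R2) := by
          rw [← hid2]
          exact inf'_le _ (mem_powerset.mpr (union_subset hY1m hY2m))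
        have hgs := hgsub R1 R2
        have hds : (∑ k ∈ Y1 ∪ Y2, d k) + (∑ k ∈ Y1 ∩ Y2, d k)
            = (∑ k ∈ Y1, d k) + (∑ k ∈ Y2, d k) := sum_union_inter
        have e1 : inr U1 = (∑ k ∈ Y1, d k) + g R1 := hY1
        have e2 : inr U2 = (∑ k ∈ Y2, d k) + g R2 := hY2
        rw [e1, e2]
        linarith
      simp only [hpdef]
      linarith
    have hp0 : p ∅ ≤ 0 := by
      have : τ ≤ inr ∅ := by
        apply le_inf'
        intro Y' hY'
        rw [mem_powerset] at hY'
        have hmem : Y' ∈ (insert i K').powerset :=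
          mem_powerset.mpr (hY'.trans (subset_insert _ _))
        have := inf'_le (fun Y => (∑ k ∈ Y, d k) + g (F.filter (fun e => β e ∉ Y))) hmem
        rw [sdiff_empty]
        exact this
      simp only [hpdef]
      linarith
    have hpb : ∀ U : Finset α, U ⊆ Fi → p U ≤ b U := by
      intro U hU
      obtain ⟨Y', hY'm, hY'⟩ := exists_mem_eq_inf' pnK'
        (fun Y' => (∑ k ∈ Y', d k) + g ((F.filter (fun e => β e ∉ Y')) \ U))
      rw [mem_powerset] at hY'm
      have hpg : p U ≤ g U := by
        have h1 : τ ≤ (∑ k ∈ Y', d k) + g (F.filter (fun e => β e ∉ Y')) :=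
          inf'_le _ (mem_powerset.mpr (hY'm.trans (subset_insert _ _)))
        have h2 : g (F.filter (fun e => β e ∉ Y'))
            ≤ g ((F.filter (fun e => β e ∉ Y')) \ U) + g U := by
          have hsub : F.filter (fun e => β e ∉ Y')
              ⊆ ((F.filter (fun e => β e ∉ Y')) \ U) ∪ U := by
            intro e he
            by_cases heU : e ∈ U
            · exact mem_union_right _ heU
            · exact mem_union_left _ (mem_sdiff.mpr ⟨he, heU⟩)
          have hm := hgmono _ _ hsub
          have hs := hgsub ((F.filter (fun e => β e ∉ Y')) \ U) U
          have hnn := hgnn (((F.filter (fun e => β e ∉ Y')) \ U) ∩ U)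
          linarith
        have e1 : inr U = (∑ k ∈ Y', d k) + g ((F.filter (fun e => β e ∉ Y')) \ U) := hY'
        simp only [hpdef]
        rw [e1]
        linarith
      have hpd : p U ≤ d i := by
        have hmem : insert i Y' ∈ (insert i K').powerset :=
          mem_powerset.mpr (insert_subset_insert _ hY'm)
        have h1 : τ ≤ (∑ k ∈ insert i Y', d k) + g (F.filter (fun e => β e ∉ insert i Y')) :=
          inf'_le _ hmem
        have hdsum : (∑ k ∈ insert i Y', d k) = d i + ∑ k ∈ Y', d k :=
          sum_insert (fun hc => hiK' (hY'm hc))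
        have hsub : F.filter (fun e => β e ∉ insert i Y')
            ⊆ (F.filter (fun e => β e ∉ Y')) \ U := by
          intro e he
          rw [mem_filter] at he
          obtain ⟨heF, hei⟩ := he
          have hβi : β e ≠ i := fun hc => hei (by rw [hc]; exact mem_insert_self _ _)
          have hβY' : β e ∉ Y' := fun hc => hei (mem_insert_of_mem hc)
          refine mem_sdiff.mpr ⟨mem_filter.mpr ⟨heF, hβY'⟩, fun hc => hβi (hβFi e (hU hc))⟩
        have h2 := hgmono _ _ hsub
        have e1 : inr U = (∑ k ∈ Y', d k) + g ((F.filter (fun e => β e ∉ Y')) \ U) := hY'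
        simp only [hpdef]
        rw [e1]
        linarith
      simp only [hbdef]
      exact le_min hpg hpd
    obtain ⟨ξ, hξ0, hξsupp, hξbd⟩ := sandwich Fi b p hb0 hbmono hbsub hpsup hp0 hpb
    -- the contracted function
    set g' : Finset α → ℝ := fun St => (Fi.powerset).inf' pnFi
        (fun T => g (St ∪ T) - ∑ e ∈ T, ξ e) with hg'def
    have hg'le : ∀ St : Finset α, ∀ T ∈ Fi.powerset, g' St ≤ g (St ∪ T) - ∑ e ∈ T, ξ e := by
      intro St T hT
      exact inf'_le _ hT
    have hξleg : ∀ T : Finset α, T ⊆ Fi → ∑ e ∈ T, ξ e ≤ g T := by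
      intro T hT
      have := (hξbd T hT).2
      have hble : b T ≤ g T := min_le_left _ _
      linarith
    have hg'0 : g' ∅ = 0 := by
      apply le_antisymm
      · have := hg'le ∅ ∅ (mem_powerset.mpr (empty_subset _))
        simpa [hg0] using this
      · apply le_inf'
        intro T hT
        rw [mem_powerset] at hT
        have h1 := hξleg T hT
        have h2 : g T ≤ g (∅ ∪ T) := by rw [empty_union]
        linarith
    have hg'mono : ∀ St Tt : Finset α, St ⊆ Tt → g' St ≤ g' Tt := by
      intro St Tt hST
      obtain ⟨T, hTm, hT⟩ := exists_mem_eq_inf' pnFi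
        (fun T => g (Tt ∪ T) - ∑ e ∈ T, ξ e)
      have h1 := hg'le St T hTm
      have h2 : g (St ∪ T) ≤ g (Tt ∪ T) := hgmono _ _ (union_subset_union_left hST)
      have e2 : g' Tt = g (Tt ∪ T) - ∑ e ∈ T, ξ e := hT
      rw [e2]
      linarith
    have hg'sub : ∀ St Tt : Finset α, g' (St ∩ Tt) + g' (St ∪ Tt) ≤ g' St + g' Tt := by
      intro St Tt
      obtain ⟨T1, hT1m, hT1⟩ := exists_mem_eq_inf' pnFi
        (fun T => g (St ∪ T) - ∑ e ∈ T, ξ e)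
      obtain ⟨T2, hT2m, hT2⟩ := exists_mem_eq_inf' pnFi
        (fun T => g (Tt ∪ T) - ∑ e ∈ T, ξ e)
      rw [mem_powerset] at hT1m hT2m
      have hint : g' (St ∩ Tt) ≤ g ((St ∪ T1) ∩ (Tt ∪ T2)) - ∑ e ∈ T1 ∩ T2, ξ e := by
        have h1 := hg'le (St ∩ Tt) (T1 ∩ T2)
          (mem_powerset.mpr (inter_subset_left.trans hT1m))
        have h2 : (St ∩ Tt) ∪ (T1 ∩ T2) ⊆ (St ∪ T1) ∩ (Tt ∪ T2) := by
          intro e he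
          rcases mem_union.mp he with he | he
          · rcases mem_inter.mp he with ⟨h3, h4⟩
            exact mem_inter.mpr ⟨mem_union_left _ h3, mem_union_left _ h4⟩
          · rcases mem_inter.mp he with ⟨h3, h4⟩
            exact mem_inter.mpr ⟨mem_union_right _ h3, mem_union_right _ h4⟩
        have h3 := hgmono _ _ h2
        linarith
      have huni : g' (St ∪ Tt) ≤ g ((St ∪ T1) ∪ (Tt ∪ T2)) - ∑ e ∈ T1 ∪ T2, ξ e := by
        have h1 := hg'le (St ∪ Tt) (T1 ∪ T2)
          (mem_powerset.mpr (union_subset hT1m hT2m))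
        have h2 : (St ∪ Tt) ∪ (T1 ∪ T2) = (St ∪ T1) ∪ (Tt ∪ T2) := by
          ext e
          simp only [mem_union]
          tauto
        rw [h2] at h1
        exact h1
      have hgs := hgsub (St ∪ T1) (Tt ∪ T2)
      have hds : (∑ e ∈ T1 ∪ T2, ξ e) + (∑ e ∈ T1 ∩ T2, ξ e)
          = (∑ e ∈ T1, ξ e) + (∑ e ∈ T2, ξ e) := sum_union_inter
      have e1 : g' St = g (St ∪ T1) - ∑ e ∈ T1, ξ e := hT1
      have e2 : g' Tt = g (Tt ∪ T2) - ∑ e ∈ T2, ξ e := hT2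
      rw [e1, e2]
      linarith
    -- apply the induction hypothesis
    have hF'K' : ∀ e ∈ F', β e ∈ K' := by
      intro e he
      have h1 := hF e (hF'F he)
      rcases mem_insert.mp h1 with h | h
      · exact absurd h (hβF' e he)
      · exact h
    obtain ⟨x', hx'0, hx'supp, hx'g, hx'cap, hx'tot⟩ := ihK F' hF'K' g' hg'0 hg'mono hg'sub
    refine ⟨fun e => ξ e + x' e, ?_, ?_, ?_, ?_, ?_⟩
    · intro e
      exact add_nonneg (hξ0 e) (hx'0 e)
    · intro e he
      have h1 : e ∉ Fi := fun hc => he (hFiF hc)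
      have h2 : e ∉ F' := fun hc => he (hF'F hc)
      show ξ e + x' e = 0
      rw [hξsupp e h1, hx'supp e h2, add_zero]
    · -- partial sums bounded by g
      intro St hSt
      show (∑ e ∈ St, (ξ e + x' e)) ≤ g St
      have hsplit : ∑ e ∈ St, (ξ e + x' e) = (∑ e ∈ St ∩ Fi, ξ e) + ∑ e ∈ St ∩ F', x' e := by
        rw [sum_add_distrib]
        congr 1
        · rw [← sum_subset (inter_subset_left (s₂ := Fi))]
          intro e heS heI
          exact hξsupp e (fun hc => heI (mem_inter.mpr ⟨heS, hc⟩))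
        · rw [← sum_subset (inter_subset_left (s₂ := F'))]
          intro e heS heI
          exact hx'supp e (fun hc => heI (mem_inter.mpr ⟨heS, hc⟩))
      have h1 : ∑ e ∈ St ∩ F', x' e ≤ g' (St ∩ F') := hx'g _ inter_subset_right
      have h2 : g' (St ∩ F') ≤ g ((St ∩ F') ∪ (St ∩ Fi)) - ∑ e ∈ St ∩ Fi, ξ e :=
        hg'le _ _ (mem_powerset.mpr inter_subset_right)
      have h3 : (St ∩ F') ∪ (St ∩ Fi) = St := by
        ext e
        simp only [mem_union, mem_inter, hF'def, hFidef, mem_filter]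
        constructor
        · rintro (⟨h, _⟩ | ⟨h, _⟩) <;> exact h
        · intro he
          by_cases hβ : β e = i
          · exact Or.inr ⟨he, hSt he, hβ⟩
          · exact Or.inl ⟨he, hSt he, hβ⟩
      rw [h3] at h2
      rw [hsplit]
      linarith
    · -- capacity constraints
      intro k
      show (∑ e ∈ F.filter (fun e => β e = k), (ξ e + x' e)) ≤ d k
      by_cases hk : k = i
      · subst hk
        have hflt : F.filter (fun e => β e = k) = Fi := rfl
        rw [hflt]
        have hsum : ∑ e ∈ Fi, (ξ e + x' e) = ∑ e ∈ Fi, ξ e := by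
          apply sum_congr rfl
          intro e he
          rw [hx'supp e (fun hc => hβF' e hc (hβFi e he)), add_zero]
        rw [hsum]
        have h1 := (hξbd Fi Subset.rfl).2
        have h2 : b Fi ≤ d k := min_le_right _ _
        linarith
      · have hflt : F.filter (fun e => β e = k) = F'.filter (fun e => β e = k) := by
          rw [hF'def, filter_filter]
          apply filter_congr
          intro e _
          constructor
          · intro h
            exact ⟨fun hc => hk (by rw [← h, hc]), h⟩
          · exact fun h => h.2
        rw [hflt]
        have hsum : ∑ e ∈ F'.filter (fun e => β e = k), (ξ e + x' e)
            = ∑ e ∈ F'.filter (fun e => β e = k), x' e := by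
          apply sum_congr rfl
          intro e he
          have heF' : e ∈ F' := (mem_filter.mp he).1
          have hni : e ∉ Fi := fun hc => hβF' e heF' (hβFi e hc)
          rw [hξsupp e hni, zero_add]
        rw [hsum]
        exact hx'cap k
    · -- the total sum equals τ
      show (∑ e ∈ F, (ξ e + x' e)) = τ
      have hFsplit : ∑ e ∈ F, (ξ e + x' e) = (∑ e ∈ Fi, ξ e) + ∑ e ∈ F', x' e := by
        rw [sum_add_distrib]
        congr 1
        · exact (sum_subset hFiF (fun e _ heI => hξsupp e heI)).symm
        · exact (sum_subset hF'F (fun e _ heI => hx'supp e heI)).symm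
      rw [hFsplit]
      apply le_antisymm
      · -- upper bound by τ
        obtain ⟨Ys, hYsm, hYs⟩ := exists_mem_eq_inf' pnK
          (fun Y => (∑ k ∈ Y, d k) + g (F.filter (fun e => β e ∉ Y)))
        rw [mem_powerset] at hYsm
        have hτYs : τ = (∑ k ∈ Ys, d k) + g (F.filter (fun e => β e ∉ Ys)) := hYs
        by_cases hiYs : i ∈ Ys
        · set Y0 := Ys.erase i with hY0def
          have hY0K' : Y0 ⊆ K' := by
            intro y hy
            rw [hY0def, mem_erase] at hy
            rcases mem_insert.mp (hYsm hy.2) with h | h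
            · exact absurd h hy.1
            · exact h
          have hb1 : ∑ e ∈ F', x' e
              ≤ (∑ k ∈ Y0, d k) + g' (F'.filter (fun e => β e ∉ Y0)) := by
            rw [hx'tot]
            exact inf'_le _ (mem_powerset.mpr hY0K')
          have hb2 : g' (F'.filter (fun e => β e ∉ Y0))
              ≤ g (F'.filter (fun e => β e ∉ Y0)) := by
            have := hg'le (F'.filter (fun e => β e ∉ Y0)) ∅
              (mem_powerset.mpr (empty_subset _))
            simpa using this
          have hclaim : F'.filter (fun e => β e ∉ Y0) = F.filter (fun e => β e ∉ Ys) := by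
            rw [hF'def, filter_filter]
            apply filter_congr
            intro e _
            have hYsins : Ys = insert i Y0 := (insert_erase hiYs).symm
            constructor
            · intro ⟨h1, h2⟩
              rw [hYsins]
              intro hc
              rcases mem_insert.mp hc with h | h
              · exact h1 h
              · exact h2 h
            · intro h
              constructor
              · intro hc
                exact h (by rw [hc]; exact hiYs)
              · intro hc
                exact h (by rw [hYsins]; exact mem_insert_of_mem hc)
          have hξd : ∑ e ∈ Fi, ξ e ≤ d i := by
            have h1 := (hξbd Fi Subset.rfl).2
            have h2 : b Fi ≤ d i := min_le_right _ _
            linarith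
          have hdsum : (∑ k ∈ Ys, d k) = d i + ∑ k ∈ Y0, d k := by
            conv_lhs => rw [← insert_erase hiYs]
            exact sum_insert (notMem_erase _ _)
          rw [hτYs, hdsum, ← hclaim]
          linarith
        · have hYsK' : Ys ⊆ K' := by
            intro y hy
            rcases mem_insert.mp (hYsm hy) with h | h
            · exact absurd (h ▸ hy) hiYs
            · exact h
          have hb1 : ∑ e ∈ F', x' e
              ≤ (∑ k ∈ Ys, d k) + g' (F'.filter (fun e => β e ∉ Ys)) := by
            rw [hx'tot]
            exact inf'_le _ (mem_powerset.mpr hYsK')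
          have hb2 : g' (F'.filter (fun e => β e ∉ Ys))
              ≤ g ((F'.filter (fun e => β e ∉ Ys)) ∪ Fi) - ∑ e ∈ Fi, ξ e :=
            hg'le _ Fi (mem_powerset.mpr Subset.rfl)
          have hclaim : (F'.filter (fun e => β e ∉ Ys)) ∪ Fi = F.filter (fun e => β e ∉ Ys) := by
            ext e
            simp only [mem_union, mem_filter, hF'def, hFidef]
            constructor
            · rintro (⟨⟨h1, _⟩, h3⟩ | ⟨h1, h2⟩)
              · exact ⟨h1, h3⟩
              · exact ⟨h1, by rw [h2]; exact hiYs⟩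
            · rintro ⟨h1, h2⟩
              by_cases hβ : β e = i
              · exact Or.inr ⟨h1, hβ⟩
              · exact Or.inl ⟨⟨h1, hβ⟩, h2⟩
          rw [hclaim] at hb2
          rw [hτYs]
          linarith
      · -- lower bound by τ
        obtain ⟨Yt, hYtm, hYt⟩ := exists_mem_eq_inf' pnK'
          (fun Y => (∑ k ∈ Y, d k) + g' (F'.filter (fun e => β e ∉ Y)))
        rw [mem_powerset] at hYtm
        have htot : ∑ e ∈ F', x' e
            = (∑ k ∈ Yt, d k) + g' (F'.filter (fun e => β e ∉ Yt)) := by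
          rw [hx'tot]
          exact hYt
        obtain ⟨Tm, hTmm, hTm⟩ := exists_mem_eq_inf' pnFi
          (fun T => g ((F'.filter (fun e => β e ∉ Yt)) ∪ T) - ∑ e ∈ T, ξ e)
        rw [mem_powerset] at hTmm
        have hg'eq : g' (F'.filter (fun e => β e ∉ Yt))
            = g ((F'.filter (fun e => β e ∉ Yt)) ∪ Tm) - ∑ e ∈ Tm, ξ e := hTm
        have hplow : p (Fi \ Tm) ≤ ∑ e ∈ Fi \ Tm, ξ e := (hξbd _ sdiff_subset).1
        have hinrle : inr (Fi \ Tm)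
            ≤ (∑ k ∈ Yt, d k) + g ((F.filter (fun e => β e ∉ Yt)) \ (Fi \ Tm)) :=
          inf'_le _ (mem_powerset.mpr hYtm)
        have hclaim : (F.filter (fun e => β e ∉ Yt)) \ (Fi \ Tm)
            = (F'.filter (fun e => β e ∉ Yt)) ∪ Tm := by
          ext e
          simp only [mem_sdiff, mem_union, mem_filter, hF'def, hFidef]
          constructor
          · rintro ⟨⟨h1, h2⟩, h3⟩
            by_cases hβ : β e = i
            · have : e ∈ Tm := by
                by_contra hc
                exact h3 ⟨⟨h1, hβ⟩, hc⟩
              exact Or.inr this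
            · exact Or.inl ⟨⟨h1, hβ⟩, h2⟩
          · rintro (⟨⟨h1, h2⟩, h3⟩ | h1)
            · refine ⟨⟨h1, h3⟩, fun hc => h2 hc.1.2⟩
            · have heFi : e ∈ Fi := hTmm h1
              refine ⟨⟨hFiF heFi, ?_⟩, fun hc => hc.2 h1⟩
              rw [hβFi e heFi]
              intro hc
              exact hiK' (hYtm hc)
          -- note: hβFi e hc.1 : β e = i contradicts h2 : β e ≠ i
        rw [hclaim] at hinrle
        have hsplitFi : (∑ e ∈ Fi \ Tm, ξ e) + ∑ e ∈ Tm, ξ e = ∑ e ∈ Fi, ξ e :=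
          sum_sdiff hTmm
        have hpval : p (Fi \ Tm) = τ - inr (Fi \ Tm) := rfl
        rw [htot, hg'eq]
        rw [hpval] at hplow
        linarith

end Generic

section Market

variable {E : Finset (B × S)} {fj : S → Finset (B × S) → ℝ} {w : B × S → ℝ} {d : B → ℝ}

lemma fTot_empty (hfj : ∀ j : S, IsMonoSubmodular (Ej E j) (fj j)) : fTot E fj ∅ = 0 := by
  unfold fTot
  rw [Fintype.sum_eq_zero]
  intro j
  rw [inter_empty]
  exact (hfj j).1

lemma fTot_mono (hfj : ∀ j : S, IsMonoSubmodular (Ej E j) (fj j))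
    {A C : Finset (B × S)} (hAC : A ⊆ C) : fTot E fj A ≤ fTot E fj C := by
  apply Finset.sum_le_sum
  intro j _
  exact (hfj j).2.1 _ _ (inter_subset_inter Subset.rfl hAC) inter_subset_left

lemma fTot_submod (hfj : ∀ j : S, IsMonoSubmodular (Ej E j) (fj j))
    (A C : Finset (B × S)) :
    fTot E fj (A ∩ C) + fTot E fj (A ∪ C) ≤ fTot E fj A + fTot E fj C := by
  unfold fTot
  rw [← Finset.sum_add_distrib, ← Finset.sum_add_distrib]
  apply Finset.sum_le_sum
  intro j _
  have h1 : Ej E j ∩ (A ∩ C) = (Ej E j ∩ A) ∩ (Ej E j ∩ C) := by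
    ext e; simp only [mem_inter]; tauto
  have h2 : Ej E j ∩ (A ∪ C) = (Ej E j ∩ A) ∪ (Ej E j ∩ C) := by
    ext e; simp only [mem_inter, mem_union]; tauto
  rw [h1, h2]
  exact (hfj j).2.2 _ _ inter_subset_left inter_subset_left

lemma vsum_partition_sellers (y : B × S → ℝ) {F : Finset (B × S)} (hF : F ⊆ E) :
    vsum y F = ∑ j : S, vsum y (Ej E j ∩ F) := by
  unfold vsum
  rw [← Finset.sum_fiberwise F (fun e => e.2) y]
  apply Finset.sum_congr rfl
  intro j _
  apply Finset.sum_congr _ (fun _ _ => rfl)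
  ext e
  simp only [mem_filter, Ej, mem_inter]
  constructor
  · rintro ⟨he, hj⟩
    exact ⟨⟨hF he, hj⟩, he⟩
  · rintro ⟨⟨_, hj⟩, he⟩
    exact ⟨he, hj⟩

lemma memP_le_fTot (hw : memP E fj w) {F : Finset (B × S)} (hF : F ⊆ E) :
    vsum w F ≤ fTot E fj F := by
  rw [vsum_partition_sellers w hF]
  apply Finset.sum_le_sum
  intro j _
  exact hw.2.2 j _ inter_subset_left

lemma fw_set_eq {F : Finset (B × S)} (hF : F ⊆ E) :
    {r : ℝ | ∃ F' : Finset (B × S), F ⊆ F' ∧ F' ⊆ E ∧ r = fTot E fj F' - vsum w F'}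
    = ↑((E.powerset.filter (fun F' => F ⊆ F')).image
        (fun F' => fTot E fj F' - vsum w F')) := by
  ext r
  simp only [Set.mem_setOf_eq, coe_image, Set.mem_image, mem_coe, mem_filter, mem_powerset]
  constructor
  · rintro ⟨F', h1, h2, h3⟩
    exact ⟨F', ⟨h2, h1⟩, h3.symm⟩
  · rintro ⟨F', ⟨h2, h1⟩, h3⟩
    exact ⟨F', h1, h2, h3.symm⟩

lemma fw_finset_nonempty {F : Finset (B × S)} (hF : F ⊆ E) :
    ((E.powerset.filter (fun F' => F ⊆ F')).image
      (fun F' => fTot E fj F' - vsum w F')).Nonempty :=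
  ⟨fTot E fj E - vsum w E, mem_image.mpr ⟨E, mem_filter.mpr ⟨mem_powerset_self E, hF⟩, rfl⟩⟩

lemma fw_le {F F' : Finset (B × S)} (hFF' : F ⊆ F') (hF'E : F' ⊆ E) :
    fw E fj w F ≤ fTot E fj F' - vsum w F' := by
  have hF : F ⊆ E := hFF'.trans hF'E
  unfold fw
  rw [fw_set_eq hF, (fw_finset_nonempty (w := w) (fj := fj) hF).csInf_eq_min']
  apply min'_le
  exact mem_image.mpr ⟨F', mem_filter.mpr ⟨mem_powerset.mpr hF'E, hFF'⟩, rfl⟩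

lemma fw_exists {F : Finset (B × S)} (hF : F ⊆ E) :
    ∃ F' : Finset (B × S), F ⊆ F' ∧ F' ⊆ E ∧ fw E fj w F = fTot E fj F' - vsum w F' := by
  unfold fw
  rw [fw_set_eq hF, (fw_finset_nonempty (w := w) (fj := fj) hF).csInf_eq_min']
  have := min'_mem _ (fw_finset_nonempty (w := w) (fj := fj) hF)
  rw [mem_image] at this
  obtain ⟨F', hF', heq⟩ := this
  rw [mem_filter, mem_powerset] at hF'
  exact ⟨F', hF'.2, hF'.1, heq.symm⟩

lemma fw_nonneg (hw : memP E fj w) {F : Finset (B × S)} (hF : F ⊆ E) :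
    0 ≤ fw E fj w F := by
  obtain ⟨F', _, hF'E, heq⟩ := fw_exists (w := w) (fj := fj) hF
  rw [heq]
  linarith [memP_le_fTot hw hF'E]

lemma fw_empty (hfj : ∀ j : S, IsMonoSubmodular (Ej E j) (fj j)) (hw : memP E fj w) :
    fw E fj w (∅ : Finset (B × S)) = 0 := by
  apply le_antisymm
  · have := fw_le (w := w) (fj := fj) (empty_subset (∅ : Finset (B × S))) (empty_subset E)
    simpa [fTot_empty hfj, vsum] using this
  · exact fw_nonneg hw (empty_subset E)

lemma fw_mono {A C : Finset (B × S)} (hAC : A ⊆ C) (hC : C ⊆ E) :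
    fw E fj w A ≤ fw E fj w C := by
  obtain ⟨C', hCC', hC'E, heq⟩ := fw_exists (w := w) (fj := fj) hC
  rw [heq]
  exact fw_le (hAC.trans hCC') hC'E

lemma fw_submod (hfj : ∀ j : S, IsMonoSubmodular (Ej E j) (fj j))
    {A C : Finset (B × S)} (hA : A ⊆ E) (hC : C ⊆ E) :
    fw E fj w (A ∩ C) + fw E fj w (A ∪ C) ≤ fw E fj w A + fw E fj w C := by
  obtain ⟨A', hAA', hA'E, heqA⟩ := fw_exists (w := w) (fj := fj) hA
  obtain ⟨C', hCC', hC'E, heqC⟩ := fw_exists (w := w) (fj := fj) hC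
  have h1 : fw E fj w (A ∩ C) ≤ fTot E fj (A' ∩ C') - vsum w (A' ∩ C') :=
    fw_le (inter_subset_inter hAA' hCC') (inter_subset_left.trans hA'E)
  have h2 : fw E fj w (A ∪ C) ≤ fTot E fj (A' ∪ C') - vsum w (A' ∪ C') :=
    fw_le (union_subset_union hAA' hCC') (union_subset hA'E hC'E)
  have h3 := fTot_submod hfj A' C'
  have h4 : vsum w (A' ∪ C') + vsum w (A' ∩ C') = vsum w A' + vsum w C' :=
    sum_union_inter
  rw [heqA, heqC]
  linarith

lemma memPwd_le_fw (hfj : ∀ j : S, IsMonoSubmodular (Ej E j) (fj j))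
    {x : B × S → ℝ} (hx : memPwd E fj w d x) {F : Finset (B × S)} (hF : F ⊆ E) :
    vsum x F ≤ fw E fj w F := by
  obtain ⟨F', hFF', hF'E, heq⟩ := fw_exists (w := w) (fj := fj) hF
  have h1 : vsum x F ≤ vsum x F' :=
    Finset.sum_le_sum_of_subset_of_nonneg hFF' (fun e _ _ => hx.1 e)
  have h2 : vsum (w + x) F' ≤ fTot E fj F' := memP_le_fTot hx.2.2.1 hF'E
  have h3 : vsum (w + x) F' = vsum w F' + vsum x F' := by
    unfold vsum
    rw [← Finset.sum_add_distrib]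
    rfl
  rw [heq]
  linarith

lemma fTot_subset_Ej (hfj : ∀ j : S, IsMonoSubmodular (Ej E j) (fj j))
    {j : S} {G : Finset (B × S)} (hG : G ⊆ Ej E j) : fTot E fj G = fj j G := by
  unfold fTot
  rw [Fintype.sum_eq_single j]
  · rw [inter_eq_right.mpr hG]
  · intro j' hj'
    have : Ej E j' ∩ G = ∅ := by
      apply eq_empty_of_forall_notMem
      intro e he
      rw [mem_inter] at he
      have h1 := (mem_filter.mp he.1).2
      have h2 := (mem_filter.mp (hG he.2)).2
      exact hj' (by rw [← h1, h2])
    rw [this]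
    exact (hfj j').1

end Market

section Market2

variable {E : Finset (B × S)} {fj : S → Finset (B × S) → ℝ} {w : B × S → ℝ} {d : B → ℝ}

/-- The cut function: `h(F) = min_Y (d(Y) + f_w(F ∖ E_Y))`. -/
def hFun (E : Finset (B × S)) (fj : S → Finset (B × S) → ℝ) (w : B × S → ℝ) (d : B → ℝ)
    (F : Finset (B × S)) : ℝ :=
  ((univ : Finset B).powerset).inf' (powerset_nonempty _)
    (fun Y => (∑ k ∈ Y, d k) + fw E fj w (F.filter (fun e => e.1 ∉ Y)))

lemma exists_opt (hfj : ∀ j : S, IsMonoSubmodular (Ej E j) (fj j)) (hw : memP E fj w)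
    (hd : ∀ k : B, 0 ≤ d k) {F : Finset (B × S)} (hF : F ⊆ E) :
    ∃ x : B × S → ℝ, memPwd E fj w d x ∧ vsum x F = hFun E fj w d F := by
  set g : Finset (B × S) → ℝ := fun St => fw E fj w (St ∩ F) with hgdef
  have hg0 : g ∅ = 0 := by
    simp only [hgdef, empty_inter]
    exact fw_empty hfj hw
  have hgmono : ∀ St Tt : Finset (B × S), St ⊆ Tt → g St ≤ g Tt := by
    intro St Tt hST
    exact fw_mono (inter_subset_inter hST Subset.rfl) (inter_subset_right.trans hF)
  have hgsub : ∀ St Tt : Finset (B × S), g (St ∩ Tt) + g (St ∪ Tt) ≤ g St + g Tt := by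
    intro St Tt
    have h1 : (St ∩ Tt) ∩ F = (St ∩ F) ∩ (Tt ∩ F) := by
      ext e; simp only [mem_inter]; tauto
    have h2 : (St ∪ Tt) ∩ F = (St ∩ F) ∪ (Tt ∩ F) := by
      ext e; simp only [mem_inter, mem_union]; tauto
    simp only [hgdef, h1, h2]
    exact fw_submod hfj (inter_subset_right.trans hF) (inter_subset_right.trans hF)
  obtain ⟨x, hx0, hxsupp, hxg, hxcap, hxtot⟩ :=
    duality (Prod.fst : B × S → B) d hd univ F (fun e _ => mem_univ _) g hg0 hgmono hgsub
  have hxF : ∀ G : Finset (B × S), vsum x G = ∑ e ∈ G ∩ F, x e := by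
    intro G
    refine (sum_subset inter_subset_left ?_).symm
    intro e heG heI
    exact hxsupp e (fun hc => heI (mem_inter.mpr ⟨heG, hc⟩))
  have hxfw : ∀ G : Finset (B × S), G ⊆ E → vsum x G ≤ fw E fj w G := by
    intro G hG
    rw [hxF G]
    calc ∑ e ∈ G ∩ F, x e ≤ g (G ∩ F) := hxg _ inter_subset_right
      _ = fw E fj w ((G ∩ F) ∩ F) := rfl
      _ = fw E fj w (G ∩ F) := by rw [inter_assoc, inter_self]
      _ ≤ fw E fj w G := fw_mono inter_subset_left hG
  have hmemP : memP E fj (w + x) := by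
    refine ⟨fun e => add_nonneg (hw.1 e) (hx0 e), ?_, ?_⟩
    · intro e he
      show w e + x e = 0
      rw [hw.2.1 e he, hxsupp e (fun hc => he (hF hc)), add_zero]
    · intro j G hG
      have hGE : G ⊆ E := hG.trans (filter_subset _ _)
      have h1 : vsum (w + x) G = vsum w G + vsum x G := by
        unfold vsum
        rw [← Finset.sum_add_distrib]
        rfl
      have h2 := hxfw G hGE
      have h3 : fw E fj w G ≤ fTot E fj G - vsum w G := fw_le Subset.rfl hGE
      have h4 : fTot E fj G = fj j G := fTot_subset_Ej hfj hG
      rw [h1]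
      linarith
  have hmem : memPwd E fj w d x := by
    refine ⟨hx0, fun e he => hxsupp e (fun hc => he (hF hc)), hmemP, ?_⟩
    intro k
    have hEiF : Ei E k ∩ F = F.filter (fun e => e.1 = k) := by
      ext e
      simp only [mem_inter, Ei, mem_filter]
      constructor
      · rintro ⟨⟨_, h2⟩, h3⟩
        exact ⟨h3, h2⟩
      · rintro ⟨h1, h2⟩
        exact ⟨⟨hF h1, h2⟩, h1⟩
    rw [vsum, ← sum_subset (inter_subset_left (s₂ := F))
      (fun e heG heI => hxsupp e (fun hc => heI (mem_inter.mpr ⟨heG, hc⟩))), hEiF]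
    exact hxcap k
  refine ⟨x, hmem, ?_⟩
  rw [vsum, hxtot]
  unfold hFun
  apply inf'_congr _ rfl
  intro Y _
  congr 1
  show fw E fj w ((F.filter (fun e => e.1 ∉ Y)) ∩ F) = _
  rw [inter_eq_left.mpr (filter_subset _ _)]

lemma fwd_eq_hFun (hfj : ∀ j : S, IsMonoSubmodular (Ej E j) (fj j)) (hw : memP E fj w)
    (hd : ∀ k : B, 0 ≤ d k) {F : Finset (B × S)} (hF : F ⊆ E) :
    fwd E fj w d F = hFun E fj w d F := by
  have hub : ∀ r ∈ {r : ℝ | ∃ x : B × S → ℝ, memPwd E fj w d x ∧ r = vsum x F},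
      r ≤ hFun E fj w d F := by
    rintro r ⟨x, hx, rfl⟩
    apply le_inf'
    intro Y _
    have hsplit : vsum x F = (∑ e ∈ F.filter (fun e => e.1 ∈ Y), x e)
        + ∑ e ∈ F.filter (fun e => ¬ e.1 ∈ Y), x e :=
      (sum_filter_add_sum_filter_not F _ x).symm
    have h2 : ∑ e ∈ F.filter (fun e => ¬ e.1 ∈ Y), x e ≤ fw E fj w (F.filter (fun e => e.1 ∉ Y)) :=
      memPwd_le_fw hfj hx ((filter_subset _ _).trans hF)
    have h1 : ∑ e ∈ F.filter (fun e => e.1 ∈ Y), x e ≤ ∑ k ∈ Y, d k := by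
      have hsub : F.filter (fun e => e.1 ∈ Y) ⊆ Y.biUnion (fun k => Ei E k) := by
        intro e he
        rw [mem_filter] at he
        exact mem_biUnion.mpr ⟨e.1, he.2, mem_filter.mpr ⟨hF he.1, rfl⟩⟩
      have hdisj : (↑Y : Set B).PairwiseDisjoint (fun k => Ei E k) := by
        intro a _ c _ hac
        simp only [Function.onFun]
        rw [Finset.disjoint_left]
        intro e he1 he2
        exact hac ((mem_filter.mp he1).2.symm.trans (mem_filter.mp he2).2)
      calc ∑ e ∈ F.filter (fun e => e.1 ∈ Y), x e
          ≤ ∑ e ∈ Y.biUnion (fun k => Ei E k), x e :=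
            Finset.sum_le_sum_of_subset_of_nonneg hsub (fun e _ _ => hx.1 e)
        _ = ∑ k ∈ Y, ∑ e ∈ Ei E k, x e := sum_biUnion hdisj
        _ ≤ ∑ k ∈ Y, d k := Finset.sum_le_sum (fun k _ => hx.2.2.2 k)
    linarith
  obtain ⟨x, hx, hxeq⟩ := exists_opt hfj hw hd hF
  have hgreat : IsGreatest {r : ℝ | ∃ x : B × S → ℝ, memPwd E fj w d x ∧ r = vsum x F}
      (hFun E fj w d F) := ⟨⟨x, hx, hxeq.symm⟩, hub⟩
  exact hgreat.csSup_eq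

end Market2

section Market3

variable {E : Finset (B × S)} {fj : S → Finset (B × S) → ℝ} {w : B × S → ℝ} {d : B → ℝ}

lemma hFun_mono {A C : Finset (B × S)} (hAC : A ⊆ C) (hC : C ⊆ E) :
    hFun E fj w d A ≤ hFun E fj w d C := by
  obtain ⟨Y, hYm, hY⟩ := exists_mem_eq_inf' (powerset_nonempty (univ : Finset B))
    (fun Y => (∑ k ∈ Y, d k) + fw E fj w (C.filter (fun e => e.1 ∉ Y)))
  have h1 : hFun E fj w d A ≤ (∑ k ∈ Y, d k) + fw E fj w (A.filter (fun e => e.1 ∉ Y)) :=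
    inf'_le _ hYm
  have h2 : fw E fj w (A.filter (fun e => e.1 ∉ Y)) ≤ fw E fj w (C.filter (fun e => e.1 ∉ Y)) :=
    fw_mono (filter_subset_filter _ hAC) ((filter_subset _ _).trans hC)
  have h3 : hFun E fj w d C = (∑ k ∈ Y, d k) + fw E fj w (C.filter (fun e => e.1 ∉ Y)) := hY
  rw [h3]
  linarith

lemma hFun_submod (hfj : ∀ j : S, IsMonoSubmodular (Ej E j) (fj j))
    {i : B} {X : Finset B} {A C : Finset (B × S)}
    (hA : A ⊆ Ei E i) (hC : C ⊆ Ei E i) :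
    hFun E fj w d (EX E X ∪ A ∩ C) + hFun E fj w d (EX E X ∪ (A ∪ C))
      ≤ hFun E fj w d (EX E X ∪ A) + hFun E fj w d (EX E X ∪ C) := by
  have hEXE : EX E X ⊆ E := filter_subset _ _
  have hEiE : Ei E i ⊆ E := filter_subset _ _
  have hAi : ∀ e ∈ A, (e.1 : B) = i := fun e he => (mem_filter.mp (hA he)).2
  have hCi : ∀ e ∈ C, (e.1 : B) = i := fun e he => (mem_filter.mp (hC he)).2
  obtain ⟨Y1, hY1m, hY1⟩ := exists_mem_eq_inf' (powerset_nonempty (univ : Finset B))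
    (fun Y => (∑ k ∈ Y, d k) + fw E fj w ((EX E X ∪ A).filter (fun e => e.1 ∉ Y)))
  obtain ⟨Y2, hY2m, hY2⟩ := exists_mem_eq_inf' (powerset_nonempty (univ : Finset B))
    (fun Y => (∑ k ∈ Y, d k) + fw E fj w ((EX E X ∪ C).filter (fun e => e.1 ∉ Y)))
  set P := (EX E X ∪ A).filter (fun e => e.1 ∉ Y1) with hPdef
  set Q := (EX E X ∪ C).filter (fun e => e.1 ∉ Y2) with hQdef
  have hPE : P ⊆ E := (filter_subset _ _).trans (union_subset hEXE (hA.trans hEiE))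
  have hQE : Q ⊆ E := (filter_subset _ _).trans (union_subset hEXE (hC.trans hEiE))
  have hPQiE : P ∩ Q ⊆ E := inter_subset_left.trans hPE
  have hPQuE : P ∪ Q ⊆ E := union_subset hPE hQE
  have hsubPQ := fw_submod (w := w) hfj hPE hQE
  have hds : (∑ k ∈ Y1 ∪ Y2, d k) + (∑ k ∈ Y1 ∩ Y2, d k)
      = (∑ k ∈ Y1, d k) + (∑ k ∈ Y2, d k) := sum_union_inter
  have e1 : hFun E fj w d (EX E X ∪ A) = (∑ k ∈ Y1, d k) + fw E fj w P := hY1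
  have e2 : hFun E fj w d (EX E X ∪ C) = (∑ k ∈ Y2, d k) + fw E fj w Q := hY2
  -- inclusion lemmas
  have hL1 : (EX E X ∪ A ∩ C).filter (fun e => e.1 ∉ Y1 ∪ Y2) ⊆ P ∩ Q := by
    intro e he
    rw [mem_filter] at he
    obtain ⟨he1, he2⟩ := he
    rw [mem_union] at he2
    push_neg at he2
    rw [mem_inter, hPdef, hQdef, mem_filter, mem_filter]
    rcases mem_union.mp he1 with h | h
    · exact ⟨⟨mem_union_left _ h, he2.1⟩, ⟨mem_union_left _ h, he2.2⟩⟩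
    · rw [mem_inter] at h
      exact ⟨⟨mem_union_right _ h.1, he2.1⟩, ⟨mem_union_right _ h.2, he2.2⟩⟩
  have hL3 : i ∈ Y1 ∨ i ∈ Y2 →
      (EX E X ∪ (A ∪ C)).filter (fun e => e.1 ∉ Y1 ∪ Y2) ⊆ P ∩ Q := by
    intro hi e he
    rw [mem_filter] at he
    obtain ⟨he1, he2⟩ := he
    rw [mem_union] at he2
    push_neg at he2
    rw [mem_inter, hPdef, hQdef, mem_filter, mem_filter]
    rcases mem_union.mp he1 with h | h
    · exact ⟨⟨mem_union_left _ h, he2.1⟩, ⟨mem_union_left _ h, he2.2⟩⟩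
    · exfalso
      rcases mem_union.mp h with h' | h'
      · rcases hi with hi | hi
        · exact he2.1 (by rw [hAi e h']; exact hi)
        · exact he2.2 (by rw [hAi e h']; exact hi)
      · rcases hi with hi | hi
        · exact he2.1 (by rw [hCi e h']; exact hi)
        · exact he2.2 (by rw [hCi e h']; exact hi)
  have hL2 : (i ∈ Y1 ↔ i ∈ Y2) →
      (EX E X ∪ (A ∪ C)).filter (fun e => e.1 ∉ Y1 ∩ Y2) ⊆ P ∪ Q := by
    intro hiff e he
    rw [mem_filter] at he
    obtain ⟨he1, he2⟩ := he
    rw [mem_inter] at he2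
    push_neg at he2
    rw [mem_union, hPdef, hQdef, mem_filter, mem_filter]
    rcases mem_union.mp he1 with h | h
    · by_cases hY : e.1 ∈ Y1
      · exact Or.inr ⟨mem_union_left _ h, he2 hY⟩
      · exact Or.inl ⟨mem_union_left _ h, hY⟩
    · rcases mem_union.mp h with h' | h'
      · by_cases hY : i ∈ Y1
        · exact absurd (hiff.mp hY) (by have := he2 (by rw [hAi e h']; exact hY); rwa [hAi e h'] at this)
        · exact Or.inl ⟨mem_union_right _ h', by rw [hAi e h']; exact hY⟩
      · by_cases hY : i ∈ Y2
        · exact absurd (by rw [hCi e h']; exact hiff.mpr hY : e.1 ∈ Y1)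
            (fun hc => (by rwa [hCi e h'] at hc : i ∈ Y1) |> fun h1 => absurd hY (by
              have := he2 hc
              rw [hCi e h'] at this
              exact fun _ => this hY))
        · exact Or.inr ⟨mem_union_right _ h', by rw [hCi e h']; exact hY⟩
  have hL4 : i ∉ Y2 →
      (EX E X ∪ A ∩ C).filter (fun e => e.1 ∉ Y1 ∩ Y2) ⊆ P ∪ Q := by
    intro hi2 e he
    rw [mem_filter] at he
    obtain ⟨he1, he2⟩ := he
    rw [mem_inter] at he2
    push_neg at he2
    rw [mem_union, hPdef, hQdef, mem_filter, mem_filter]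
    rcases mem_union.mp he1 with h | h
    · by_cases hY : e.1 ∈ Y1
      · exact Or.inr ⟨mem_union_left _ h, he2 hY⟩
      · exact Or.inl ⟨mem_union_left _ h, hY⟩
    · rw [mem_inter] at h
      exact Or.inr ⟨mem_union_right _ h.2, by rw [hCi e h.2]; exact hi2⟩
  have hL4' : i ∉ Y1 →
      (EX E X ∪ A ∩ C).filter (fun e => e.1 ∉ Y1 ∩ Y2) ⊆ P ∪ Q := by
    intro hi1 e he
    rw [mem_filter] at he
    obtain ⟨he1, he2⟩ := he
    rw [mem_inter] at he2
    push_neg at he2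
    rw [mem_union, hPdef, hQdef, mem_filter, mem_filter]
    rcases mem_union.mp he1 with h | h
    · by_cases hY : e.1 ∈ Y1
      · exact Or.inr ⟨mem_union_left _ h, he2 hY⟩
      · exact Or.inl ⟨mem_union_left _ h, hY⟩
    · rw [mem_inter] at h
      exact Or.inl ⟨mem_union_right _ h.1, by rw [hAi e h.1]; exact hi1⟩
  -- generic bounds
  have hb : ∀ (Fset : Finset (B × S)) (Y : Finset B) (R : Finset (B × S)), R ⊆ E →
      Fset.filter (fun e => e.1 ∉ Y) ⊆ R →
      hFun E fj w d Fset ≤ (∑ k ∈ Y, d k) + fw E fj w R := by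
    intro Fset Y R hRE hsub
    have h1 : hFun E fj w d Fset
        ≤ (∑ k ∈ Y, d k) + fw E fj w (Fset.filter (fun e => e.1 ∉ Y)) :=
      inf'_le _ (mem_powerset.mpr (subset_univ Y))
    have h2 := fw_mono (w := w) (fj := fj) hsub hRE
    linarith
  rw [e1, e2]
  by_cases h1 : i ∈ Y1 <;> by_cases h2 : i ∈ Y2
  · have b1 := hb (EX E X ∪ A ∩ C) (Y1 ∪ Y2) (P ∩ Q) hPQiE hL1
    have b2 := hb (EX E X ∪ (A ∪ C)) (Y1 ∩ Y2) (P ∪ Q) hPQuE (hL2 (iff_of_true h1 h2))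
    linarith
  · have b1 := hb (EX E X ∪ A ∩ C) (Y1 ∩ Y2) (P ∪ Q) hPQuE (hL4 h2)
    have b2 := hb (EX E X ∪ (A ∪ C)) (Y1 ∪ Y2) (P ∩ Q) hPQiE (hL3 (Or.inl h1))
    linarith
  · have b1 := hb (EX E X ∪ A ∩ C) (Y1 ∩ Y2) (P ∪ Q) hPQuE (hL4' h1)
    have b2 := hb (EX E X ∪ (A ∪ C)) (Y1 ∪ Y2) (P ∩ Q) hPQiE (hL3 (Or.inr h2))
    linarith
  · have b1 := hb (EX E X ∪ A ∩ C) (Y1 ∪ Y2) (P ∩ Q) hPQiE hL1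
    have b2 := hb (EX E X ∪ (A ∪ C)) (Y1 ∩ Y2) (P ∪ Q) hPQuE (hL2 (iff_of_false h1 h2))
    linarith

end Market3

/-- for `X ⊆ N - i`, the function `G ↦ f_{w,d}(E_X ∪ G) - f_{w,d}(E_X)`
is monotone submodular on `E_i`. -/
theorem fwd_marginal_monotone_submodular
    (E : Finset (B × S)) (fj : S → Finset (B × S) → ℝ)
    (hfj : ∀ j : S, IsMonoSubmodular (Ej E j) (fj j))
    (w : B × S → ℝ) (hw : memP E fj w)
    (d : B → ℝ) (hd : ∀ i : B, 0 ≤ d i)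
    (i : B) (X : Finset B) (hX : i ∉ X) :
    IsMonoSubmodular (Ei E i)
      (fun G => fwd E fj w d (EX E X ∪ G) - fwd E fj w d (EX E X)) := by
  have hEXE : EX E X ⊆ E := filter_subset _ _
  have hEiE : Ei E i ⊆ E := filter_subset _ _
  refine ⟨?_, ?_, ?_⟩
  · show fwd E fj w d (EX E X ∪ ∅) - fwd E fj w d (EX E X) = 0
    rw [union_empty, sub_self]
  · intro A C hAC hC
    show fwd E fj w d (EX E X ∪ A) - fwd E fj w d (EX E X)
      ≤ fwd E fj w d (EX E X ∪ C) - fwd E fj w d (EX E X)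
    have hCE : EX E X ∪ C ⊆ E := union_subset hEXE (hC.trans hEiE)
    have hAE : EX E X ∪ A ⊆ E := union_subset hEXE ((hAC.trans hC).trans hEiE)
    rw [fwd_eq_hFun hfj hw hd hAE, fwd_eq_hFun hfj hw hd hCE]
    have := hFun_mono (d := d) (fj := fj) (w := w) (union_subset_union_right hAC) hCE
    linarith
  · intro A C hA hC
    show fwd E fj w d (EX E X ∪ A ∩ C) - fwd E fj w d (EX E X)
      + (fwd E fj w d (EX E X ∪ (A ∪ C)) - fwd E fj w d (EX E X))
      ≤ fwd E fj w d (EX E X ∪ A) - fwd E fj w d (EX E X)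
      + (fwd E fj w d (EX E X ∪ C) - fwd E fj w d (EX E X))
    rw [fwd_eq_hFun hfj hw hd (union_subset hEXE (inter_subset_left.trans (hA.trans hEiE))),
      fwd_eq_hFun hfj hw hd (union_subset hEXE (union_subset (hA.trans hEiE) (hC.trans hEiE))),
      fwd_eq_hFun hfj hw hd (union_subset hEXE (hA.trans hEiE)),
      fwd_eq_hFun hfj hw hd (union_subset hEXE (hC.trans hEiE))]
    have := hFun_submod (d := d) (w := w) (X := X) hfj hA hC
    linarith

end TwoSidedMarket
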